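/- With M = G×G, ω = γ_{ij} π₁*ω^i ∧ π₂*ω^j as above, let X = ξ^i Y_i (ξ^i constants) be a left-invariant vector field on G and Z = X₁ + X₂ the vector field on M given by the two lifts of X. Then d(i(Z)ω) = 0 if and only if γ_{ij} ξ^i c^j_{hk} = 0 for all h,k, i.e. if and only if X is γ-orthogonal to the derived algebra [g,g]. -/
import Mathlib

/-!
Statement 11: With `M = G×G`, `ω = γ_{ij} π₁*ω^i ∧ π₂*ω^j`, let `X` be a left-invariant
vector field on `G` and `Z = X₁ + X₂` (i.e. `Z = (X,X)` at the Lie algebra level).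
Then `d(i(Z)ω) = 0` iff `γ(X, [u,v]) = 0` for all `u,v ∈ 𝔤`, i.e. iff `X` is
`γ`-orthogonal to the derived algebra `[𝔤,𝔤]`.

At the Lie-algebra level: `i(Z)ω (A) = γ(X,A₂) - γ(A₁,X)`, and the differential of the
left-invariant 1-form `i(Z)ω` is `d(i(Z)ω)(U,V) = -(i(Z)ω)([U,V])` with the
componentwise bracket on `𝔤 × 𝔤`.
-/

/-- The left-invariant 2-form `ω` on `G × G` evaluated on left-invariant fields. -/
def wGG {g : Type*} [LieRing g] [LieAlgebra ℝ g]
    (γ : g →ₗ[ℝ] g →ₗ[ℝ] ℝ) (A B : g × g) : ℝ :=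
  γ A.1 B.2 - γ B.1 A.2

/-- The Chevalley–Eilenberg differential of the left-invariant 1-form `i(Z)ω`,
`Z = (X,X)`, evaluated on `U, V`. -/
def diZw {g : Type*} [LieRing g] [LieAlgebra ℝ g]
    (γ : g →ₗ[ℝ] g →ₗ[ℝ] ℝ) (X : g) (U V : g × g) : ℝ :=
  - wGG γ (X, X) (⁅U.1, V.1⁆, ⁅U.2, V.2⁆)

theorem diZomega_zero_iff_orthogonal_derived {g : Type*} [LieRing g] [LieAlgebra ℝ g]
    (γ : g →ₗ[ℝ] g →ₗ[ℝ] ℝ)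
    (hsym : ∀ a b : g, γ a b = γ b a)
    (X : g) :
    (∀ U V : g × g, diZw γ X U V = 0) ↔ (∀ u v : g, γ X ⁅u, v⁆ = 0) := by
  constructor
  · intro h u v
    have := h (0, u) (0, v)
    simp [diZw, wGG] at this
    simpa using this
  · intro h U V
    simp [diZw, wGG, h U.2 V.2, hsym ⁅U.1, V.1⁆ X, h U.1 V.1]
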